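/- Let d ≥ 1 and for ρ, σ ∈ S_d and r ≥ 0 let W^r_<(ρ,σ) denote the number of strictly monotone r-step walks from ρ to σ in the Hurwitz–Cayley graph. Then W^r_<(ρ,σ) = 1 if r = d − ℓ(ρ⁻¹σ) and W^r_<(ρ,σ) = 0 otherwise; consequently, for every q, the generating function ∑_{r≥0} q^r W^r_<(ρ,σ) equals q^{d − ℓ(ρ⁻¹σ)}. -/

import Mathlib

noncomputable section

/-- The number of cycles of a permutation of `{1,…,d}`, counting fixed points as 1-cycles. -/
def ell {d : ℕ} (π : Equiv.Perm (Fin d)) : ℕ :=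
  π.cycleType.card + (d - π.support.card)

/-- The transposition associated with a pair of points. -/
def toSwap {d : ℕ} (p : Fin d × Fin d) : Equiv.Perm (Fin d) :=
  Equiv.swap p.1 p.2

/-- `Wlt d r ρ σ` is the number of strictly monotone `r`-step walks `ρ → σ` in the
Hurwitz–Cayley graph: sequences of transpositions `((i_1 j_1), …, (i_r j_r))` with `i_k < j_k`,
`j_1 < ⋯ < j_r` and `ρ·(i_1 j_1)⋯(i_r j_r) = σ`. -/
def Wlt (d r : ℕ) (ρ σ : Equiv.Perm (Fin d)) : ℕ :=
  Nat.card {l : List (Fin d × Fin d) //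
    l.length = r ∧ (∀ p ∈ l, p.1 < p.2) ∧ (l.map Prod.snd).Pairwise (· < ·) ∧
      ρ * (l.map toSwap).prod = σ}

open Equiv Equiv.Perm List Finset

variable {d : ℕ}

lemma ell_le (π : Equiv.Perm (Fin d)) : ell π ≤ d := by
  have h1 : Multiset.card π.cycleType • 1 ≤ π.cycleType.sum :=
    Multiset.card_nsmul_le_sum fun x hx =>
      le_trans one_le_two (Equiv.Perm.two_le_of_mem_cycleType hx)
  have h2 : π.cycleType.sum = π.support.card := Equiv.Perm.sum_cycleType π
  have h3 : π.support.card ≤ d := by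
    simpa using Finset.card_le_univ π.support
  simp only [smul_eq_mul, mul_one] at h1
  unfold ell
  omega

lemma ell_step (π : Equiv.Perm (Fin d)) {j : Fin d} (hj : π j ≠ j) :
    ell (π * Equiv.swap (π⁻¹ j) j) = ell π + 1 := by
  classical
  set a := π⁻¹ j with ha
  set c := π.cycleOf j with hcdef
  have hmem : c ∈ π.cycleFactorsFinset :=
    Equiv.Perm.cycleOf_mem_cycleFactorsFinset_iff.mpr (Equiv.Perm.mem_support.mpr hj)
  have hc : c.IsCycle := (Equiv.Perm.mem_cycleFactorsFinset_iff.mp hmem).1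
  set g := π * c⁻¹ with hgdef
  have hdisj : Equiv.Perm.Disjoint g c :=
    Equiv.Perm.disjoint_mul_inv_of_mem_cycleFactorsFinset hmem
  have hπ : π = g * c := by rw [hgdef]; group
  have hca : c a = j := by
    have hsc : π.SameCycle j a := ⟨-1, by simp [ha]⟩
    rw [hcdef, hsc.cycleOf_apply, ha]
    simp
  have hcj : c j ≠ j := by rw [hcdef, Equiv.Perm.cycleOf_apply_self]; exact hj
  have hconj : c * Equiv.swap a j = Equiv.swap j (c j) * c := by
    have h := Equiv.swap_apply_apply c a j
    rw [hca] at h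
    rw [h]
    group
  have hπcT : Multiset.card π.cycleType = Multiset.card g.cycleType + 1 := by
    rw [hπ, hdisj.cycleType_mul, Multiset.card_add,
      Equiv.Perm.card_cycleType_eq_one.mpr hc]
  have hπsupp : π.support.card = g.support.card + c.support.card := by
    rw [hπ, hdisj.card_support_mul]
  have hjc : j ∈ c.support := by
    rw [hcdef, Equiv.Perm.mem_support_cycleOf_iff]
    exact ⟨Equiv.Perm.SameCycle.refl _ _, Equiv.Perm.mem_support.mpr hj⟩
  have hd : π.support.card ≤ d := by simpa using Finset.card_le_univ π.support
  have hprod : π * Equiv.swap a j = g * (c * Equiv.swap a j) := by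
    rw [hπ, mul_assoc]
  by_cases hB : c (c j) = j
  · -- c is a transposition; it gets killed
    have hc2 : c = Equiv.swap j (c j) := hc.eq_swap_of_apply_apply_eq_self hcj hB
    have hone : c * Equiv.swap a j = 1 := by
      rw [hconj, hc2]
      simp
    have hσ : π * Equiv.swap a j = g := by rw [hprod, hone, mul_one]
    have hm : c.support.card = 2 := by
      rw [hc2]
      exact Equiv.Perm.card_support_swap (Ne.symm hcj)
    rw [hσ]
    unfold ell
    omega
  · -- the cycle shrinks by one
    set c' := Equiv.swap j (c j) * c with hc'def
    have hcyc : c'.IsCycle := hc.swap_mul hcj hB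
    have hsupp : c'.support = c.support \ {j} := Equiv.Perm.support_swap_mul_eq c j hB
    have hm' : c'.support.card = c.support.card - 1 := by
      rw [hsupp, Finset.sdiff_singleton_eq_erase, Finset.card_erase_of_mem hjc]
    have hm2 : 2 ≤ c'.support.card := hcyc.two_le_card_support
    have hdisj' : Equiv.Perm.Disjoint g c' := by
      rw [Equiv.Perm.disjoint_iff_disjoint_support] at hdisj ⊢
      refine Finset.disjoint_of_subset_right ?_ hdisj
      rw [hsupp]; exact Finset.sdiff_subset
    have hσ : π * Equiv.swap a j = g * c' := by rw [hprod, hconj]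
    have hσcT : Multiset.card (π * Equiv.swap a j).cycleType
        = Multiset.card g.cycleType + 1 := by
      rw [hσ, hdisj'.cycleType_mul, Multiset.card_add,
        Equiv.Perm.card_cycleType_eq_one.mpr hcyc]
    have hσsupp : (π * Equiv.swap a j).support.card
        = g.support.card + c'.support.card := by
      rw [hσ, hdisj'.card_support_mul]
    unfold ell
    omega

lemma prod_fix (L : List (Equiv.Perm (Fin d))) (x : Fin d) (h : ∀ g ∈ L, g x = x) :
    L.prod x = x := by
  induction L with
  | nil => simp
  | cons g t ih =>
    have := h g (by simp)
    simp only [List.prod_cons, Equiv.Perm.mul_apply]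
    rw [ih fun g' hg' => h g' (by simp [hg']), this]

lemma concat_key (l₁ : List (Fin d × Fin d)) (a j : Fin d)
    (h1 : ∀ p ∈ l₁ ++ [(a, j)], p.1 < p.2)
    (h2 : ((l₁ ++ [(a, j)]).map Prod.snd).Pairwise (· < ·)) :
    (((l₁ ++ [(a, j)]).map toSwap).prod) j ≠ j ∧
      (((l₁ ++ [(a, j)]).map toSwap).prod) a = j ∧
      ∀ x, j < x → (((l₁ ++ [(a, j)]).map toSwap).prod) x = x := by
  have haj : a < j := h1 (a, j) (by simp)
  have hlt : ∀ p ∈ l₁, p.2 < j := by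
    intro p hp
    have h2' : (l₁.map Prod.snd ++ [j]).Pairwise (· < ·) := by simpa using h2
    have := (List.pairwise_append.mp h2').2.2
    simpa using this p.2 (List.mem_map_of_mem (f := Prod.snd) hp)
  have hP : ∀ x, j ≤ x → ((l₁.map toSwap).prod) x = x := by
    intro x hx
    apply prod_fix
    intro g hg
    obtain ⟨p, hp, rfl⟩ := List.mem_map.mp hg
    have h1p := h1 p (by simp [hp])
    have h2p := hlt p hp
    exact Equiv.swap_apply_of_ne_of_ne (by exact ne_of_gt (lt_of_lt_of_le (h1p.trans h2p) hx))
      (by exact ne_of_gt (lt_of_lt_of_le h2p hx))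
  have hsplit : ((l₁ ++ [(a, j)]).map toSwap).prod
      = (l₁.map toSwap).prod * Equiv.swap a j := by
    rw [List.map_append, List.prod_append]
    simp [toSwap]
  rw [hsplit]
  refine ⟨?_, ?_, ?_⟩
  · simp only [Equiv.Perm.mul_apply, Equiv.swap_apply_right]
    intro h
    have hPj : ((l₁.map toSwap).prod) j = j := hP j le_rfl
    have := (l₁.map toSwap).prod.injective (h.trans hPj.symm)
    exact absurd this (ne_of_lt haj)
  · simp only [Equiv.Perm.mul_apply, Equiv.swap_apply_left]
    exact hP j le_rfl
  · intro x hx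
    simp only [Equiv.Perm.mul_apply]
    rw [Equiv.swap_apply_of_ne_of_ne (ne_of_gt (haj.trans hx)) (ne_of_gt hx)]
    exact hP x (le_of_lt hx)

lemma snd_lt (l : List (Fin d × Fin d)) (h1 : ∀ p ∈ l, p.1 < p.2)
    (h2 : (l.map Prod.snd).Pairwise (· < ·)) (j : Fin d)
    (hfix : ∀ x, j ≤ x → ((l.map toSwap).prod) x = x) :
    ∀ p ∈ l, p.2 < j := by
  rcases l.eq_nil_or_concat' with rfl | ⟨l₁, e, rfl⟩
  · simp
  · obtain ⟨a', j'⟩ := e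
    obtain ⟨hne, -, -⟩ := concat_key l₁ a' j' h1 h2
    have hj' : j' < j := by
      by_contra hc
      exact hne (hfix j' (le_of_not_gt hc))
    intro p hp
    rcases List.mem_append.mp hp with hp1 | hp2
    · have h2' : (l₁.map Prod.snd ++ [j']).Pairwise (· < ·) := by simpa using h2
      have hplt : p.2 < j' := by
        simpa using (List.pairwise_append.mp h2').2.2 p.2 (List.mem_map_of_mem (f := Prod.snd) hp1)
      exact hplt.trans hj'
    · simp only [List.mem_singleton] at hp2
      subst hp2
      exact hj'

lemma main_lemma : ∀ n (π : Equiv.Perm (Fin d)), π.support.card = n →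
    ∃ l : List (Fin d × Fin d), (∀ p ∈ l, p.1 < p.2) ∧ (l.map Prod.snd).Pairwise (· < ·) ∧
      (l.map toSwap).prod = π ∧ l.length = d - ell π ∧
      ∀ l' : List (Fin d × Fin d), (∀ p ∈ l', p.1 < p.2) → (l'.map Prod.snd).Pairwise (· < ·) →
        (l'.map toSwap).prod = π → l' = l := by
  intro n
  induction n using Nat.strong_induction_on with
  | _ n IH =>
    intro π hcard
    by_cases h1 : π = 1
    · subst h1
      have hell : ell (1 : Equiv.Perm (Fin d)) = d := by
        unfold ell
        simp
      refine ⟨[], by simp, by simp, by simp, by simp [hell], ?_⟩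
      intro l' hp' hs' hprod'
      rcases l'.eq_nil_or_concat' with rfl | ⟨l₁, e, rfl⟩
      · rfl
      · obtain ⟨a', j'⟩ := e
        obtain ⟨hne, -, -⟩ := concat_key l₁ a' j' hp' hs'
        rw [hprod'] at hne
        simp at hne
    · have hne : π.support.Nonempty :=
        Finset.nonempty_of_ne_empty fun h => h1 (Equiv.Perm.support_eq_empty_iff.mp h)
      set j := π.support.max' hne with hjdef
      have hjmem : j ∈ π.support := π.support.max'_mem hne
      have hj : π j ≠ j := Equiv.Perm.mem_support.mp hjmem
      set a := π⁻¹ j with hadef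
      have hπa : π a = j := by rw [hadef]; simp
      have hanej : a ≠ j := by
        intro h
        rw [h] at hπa
        exact hj hπa
      have hamem : a ∈ π.support := Equiv.Perm.mem_support.mpr (by rw [hπa]; exact Ne.symm hanej)
      have halt : a < j := lt_of_le_of_ne (π.support.le_max' a hamem) hanej
      set π' := π * Equiv.swap a j with hπ'def
      have hπ'j : π' j = j := by
        rw [hπ'def]
        simp only [Equiv.Perm.mul_apply, Equiv.swap_apply_right]
        exact hπa
      have hsub : π'.support ⊆ π.support.erase j := by
        intro x hx
        have hxne : π' x ≠ x := Equiv.Perm.mem_support.mp hx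
        have hxj : x ≠ j := by
          intro h; rw [h] at hxne; exact hxne hπ'j
        rw [Finset.mem_erase]
        refine ⟨hxj, ?_⟩
        by_cases hxa : x = a
        · rw [hxa]; exact hamem
        · rw [Equiv.Perm.mem_support]
          have : π' x = π x := by
            rw [hπ'def]
            simp only [Equiv.Perm.mul_apply]
            rw [Equiv.swap_apply_of_ne_of_ne hxa hxj]
          rw [← this]
          exact hxne
      have hlt : π'.support.card < n := by
        calc π'.support.card ≤ (π.support.erase j).card := Finset.card_le_card hsub
          _ < π.support.card := Finset.card_erase_lt_of_mem hjmem
          _ = n := hcard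
      have hell : ell π' = ell π + 1 := by
        rw [hπ'def, hadef]
        exact ell_step π hj
      obtain ⟨l₀, hp₀, hs₀, hprod₀, hlen₀, huniq₀⟩ := IH _ hlt π' rfl
      have hfix : ∀ x, j ≤ x → ((l₀.map toSwap).prod) x = x := by
        intro x hx
        rw [hprod₀]
        rcases eq_or_lt_of_le hx with rfl | hxlt
        · exact hπ'j
        · have hxs : x ∉ π.support := by
            intro h
            exact absurd (π.support.le_max' x h) (not_le.mpr hxlt)
          have hπx : π x = x := Equiv.Perm.notMem_support.mp hxs
          rw [hπ'def]
          simp only [Equiv.Perm.mul_apply]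
          rw [Equiv.swap_apply_of_ne_of_ne (ne_of_gt (halt.trans hxlt)) (ne_of_gt hxlt), hπx]
      have hbound : ∀ p ∈ l₀, p.2 < j := snd_lt l₀ hp₀ hs₀ j hfix
      refine ⟨l₀ ++ [(a, j)], ?_, ?_, ?_, ?_, ?_⟩
      · intro p hp
        rcases List.mem_append.mp hp with hp1 | hp2
        · exact hp₀ p hp1
        · simp only [List.mem_singleton] at hp2
          subst hp2
          exact halt
      · rw [List.map_append]
        refine List.pairwise_append.mpr ⟨hs₀, by simp, ?_⟩
        intro b hb c hc
        simp only [List.map_cons, List.map_nil, List.mem_singleton] at hc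
        subst hc
        obtain ⟨p, hp, rfl⟩ := List.mem_map.mp hb
        exact hbound p hp
      · rw [List.map_append, List.prod_append]
        simp only [List.map_cons, List.map_nil, List.prod_cons, List.prod_nil, mul_one]
        rw [hprod₀, hπ'def, toSwap, mul_assoc, Equiv.swap_mul_self, mul_one]
      · have h2 : ell π' ≤ d := ell_le π'
        rw [List.length_append, hlen₀, hell]
        simp only [List.length_singleton]
        omega
      · intro l' hp' hs' hprod'
        rcases l'.eq_nil_or_concat' with rfl | ⟨l₁, e, rfl⟩
        · exfalso
          simp only [List.map_nil, List.prod_nil] at hprod'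
          exact h1 hprod'.symm
        · obtain ⟨a', j'⟩ := e
          obtain ⟨hne', hπa', hgt'⟩ := concat_key l₁ a' j' hp' hs'
          rw [hprod'] at hne' hπa' hgt'
          have hj'mem : j' ∈ π.support := Equiv.Perm.mem_support.mpr hne'
          have hj'le : j' ≤ j := π.support.le_max' j' hj'mem
          have hjle : j ≤ j' := by
            by_contra hc
            exact hj (hgt' j (lt_of_not_ge hc))
          have hjj' : j' = j := le_antisymm hj'le hjle
          subst hjj'
          have haa' : a' = a := by
            rw [hadef]
            rw [← hπa']
            simp
          subst haa'
          have hl₁prod : (l₁.map toSwap).prod = π' := by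
            have hsplit : ((l₁ ++ [(a, j)]).map toSwap).prod
                = (l₁.map toSwap).prod * Equiv.swap a j := by
              rw [List.map_append, List.prod_append]
              simp [toSwap]
            rw [hsplit] at hprod'
            rw [hπ'def]
            have := congrArg (· * Equiv.swap a j) hprod'
            simpa [mul_assoc] using this
          have hl₁p : ∀ p ∈ l₁, p.1 < p.2 := fun p hp => hp' p (List.mem_append_left _ hp)
          have hl₁s : (l₁.map Prod.snd).Pairwise (· < ·) := by
            have hs'' : (l₁.map Prod.snd ++ [j]).Pairwise (· < ·) := by simpa using hs'
            exact (List.pairwise_append.mp hs'').1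
          rw [huniq₀ l₁ hl₁p hl₁s hl₁prod]

/-- The number of strictly monotone `r`-step walks `ρ → σ` in the
Hurwitz–Cayley graph is `1` if `r = d - ℓ(ρ⁻¹σ)` and `0` otherwise; consequently the generating
function `∑_r q^r W^r_<(ρ,σ)` equals `q^(d - ℓ(ρ⁻¹σ))`. -/
theorem Wlt_eq_ite (d : ℕ) (hd : 1 ≤ d) (ρ σ : Equiv.Perm (Fin d)) :
    (∀ r : ℕ, Wlt d r ρ σ = if r = d - ell (ρ⁻¹ * σ) then 1 else 0) ∧
    (∀ q : ℂ, ∑' r : ℕ, q ^ r * (Wlt d r ρ σ : ℂ) = q ^ (d - ell (ρ⁻¹ * σ))) := by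
  classical
  set π := ρ⁻¹ * σ with hπdef
  obtain ⟨l, hpairs, hsorted, hprod, hlen, huniq⟩ := main_lemma π.support.card π rfl
  have hiff : ∀ x : Equiv.Perm (Fin d), ρ * x = σ ↔ x = π := by
    intro x
    rw [hπdef]
    constructor
    · intro h; rw [← h]; group
    · intro h; rw [h]; group
  have hmain : ∀ r, Wlt d r ρ σ = if r = d - ell π then 1 else 0 := by
    intro r
    unfold Wlt
    split_ifs with hr
    · rw [Nat.card_eq_one_iff_unique]
      constructor
      · constructor
        rintro ⟨l₁, hr₁, hp₁, hs₁, he₁⟩ ⟨l₂, hr₂, hp₂, hs₂, he₂⟩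
        apply Subtype.ext
        simp only
        rw [huniq l₁ hp₁ hs₁ ((hiff _).mp he₁), huniq l₂ hp₂ hs₂ ((hiff _).mp he₂)]
      · exact ⟨⟨l, by rw [hr, ← hlen], hpairs, hsorted, (hiff _).mpr hprod⟩⟩
    · have hEmpty : IsEmpty {l : List (Fin d × Fin d) //
          l.length = r ∧ (∀ p ∈ l, p.1 < p.2) ∧ (l.map Prod.snd).Pairwise (· < ·) ∧
          ρ * (l.map toSwap).prod = σ} := by
        constructor
        rintro ⟨l', hr', hp', hs', he'⟩
        apply hr
        rw [← hr', huniq l' hp' hs' ((hiff _).mp he'), hlen]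
      exact Nat.card_of_isEmpty
  refine ⟨hmain, fun q => ?_⟩
  rw [tsum_eq_single (d - ell π)]
  · rw [hmain]
    simp
  · intro r hr
    rw [hmain]
    simp [hr]
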